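/- arXiv:2302.10151 — 3 statements merged into one kernel-verified Lean document; each statement's English description precedes it below -/
import Mathlib

section
/- Distinct clusters have disjoint v-intervals: if 𝒮 and 𝒯 are distinct equivalence classes of ~, then I_v(𝒮) ∩ I_v(𝒯) = ∅. -/
def duelRel {S : Type*} (v : S → ℝ) (f : S → Bool) (x y : S) : Prop :=
  (f x = true ∧ f y = true ∧ v x = v y) ∨
  (f x = false ∧ f y = false ∧
    ∀ z : S, f z = true → ¬ (min (v x) (v y) ≤ v z ∧ v z < max (v x) (v y)))

private lemma duel_between (p q r z : ℝ)
    (h1 : ¬ (min p q ≤ z ∧ z < max p q))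
    (h2 : ¬ (min p r ≤ z ∧ z < max p r)) :
    ¬ (min q r ≤ z ∧ z < max q r) := by
  simp only [not_and, not_lt, min_le_iff, max_le_iff, le_max_iff] at *
  intro h
  rcases le_or_gt p z with hp | hp
  · rcases le_or_gt q z with hq | hq
    · rcases le_or_gt r z with hr | hr
      · exact ⟨hq, hr⟩
      · have := h2 (Or.inl hp); constructor <;> linarith [this.1, this.2]
    · have := h1 (Or.inl hp); constructor <;> linarith [this.1, this.2]
  · rcases h with hq | hr
    · have := h1 (Or.inr hq); constructor <;> linarith [this.1, this.2]
    · have := h2 (Or.inr hr); constructor <;> linarith [this.1, this.2]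

private lemma side_le {S : Type*} (v : S → ℝ) (f : S → Bool) (c z : S)
    (hc : f c = false) (hzt : f z = true) (hcz : v c ≤ v z) :
    ∀ x, duelRel v f c x → v x ≤ v z := by
  intro x hx
  rcases hx with ⟨h, _, _⟩ | ⟨_, _, hz'⟩
  · simp [hc] at h
  · by_contra hgt
    push_neg at hgt
    exact hz' z hzt ⟨le_trans (min_le_left _ _) hcz,
      lt_of_lt_of_le hgt (le_max_right _ _)⟩

private lemma side_gt {S : Type*} (v : S → ℝ) (f : S → Bool) (c z : S)
    (hc : f c = false) (hzt : f z = true) (hcz : v z < v c) :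
    ∀ x, duelRel v f c x → v z < v x := by
  intro x hx
  rcases hx with ⟨h, _, _⟩ | ⟨_, _, hz'⟩
  · simp [hc] at h
  · by_contra hle
    push_neg at hle
    exact hz' z hzt ⟨le_trans (min_le_right _ _) hle,
      lt_of_lt_of_le hcz (le_max_left _ _)⟩

private lemma sep_empty {S : Type*} [Fintype S] (v : S → ℝ) (A B : Set S)
    (hA : A.Nonempty) (hB : B.Nonempty) (w : ℝ)
    (hA' : ∀ x ∈ A, v x ≤ w) (hB' : ∀ y ∈ B, w < v y) :
    Set.Ioo (sInf (v '' A)) (sSup (v '' A)) ∩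
      Set.Ioo (sInf (v '' B)) (sSup (v '' B)) = ∅ := by
  rw [Set.eq_empty_iff_forall_notMem]
  rintro t ⟨⟨_, htA⟩, ⟨htB, _⟩⟩
  obtain ⟨x, hx, hxe⟩ := (hA.image v).csSup_mem ((A.toFinite).image v)
  obtain ⟨y, hy, hye⟩ := (hB.image v).csInf_mem ((B.toFinite).image v)
  have h1 := hA' x hx
  have h2 := hB' y hy
  rw [hxe] at h1
  rw [hye] at h2
  linarith

/-- Distinct clusters have disjoint `v`-intervals. -/
theorem clusters_v_intervals_disjoint {S : Type*} [Fintype S]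
    (v : S → ℝ) (f : S → Bool) (𝒮 𝒯 : Set S)
    (h𝒮 : ∃ a : S, 𝒮 = {y | duelRel v f a y})
    (h𝒯 : ∃ b : S, 𝒯 = {y | duelRel v f b y})
    (hne : 𝒮 ≠ 𝒯) :
    Set.Ioo (sInf (v '' 𝒮)) (sSup (v '' 𝒮)) ∩
      Set.Ioo (sInf (v '' 𝒯)) (sSup (v '' 𝒯)) = ∅ := by
  obtain ⟨a, ha⟩ := h𝒮
  obtain ⟨b, hb⟩ := h𝒯
  by_cases hfa : f a = true
  · have himg : v '' 𝒮 = {v a} := by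
      subst ha
      ext r
      constructor
      · rintro ⟨y, hy, rfl⟩
        rcases hy with ⟨_, _, he⟩ | ⟨h, _, _⟩
        · simp [he.symm]
        · simp [hfa] at h
      · rintro rfl
        exact ⟨a, Or.inl ⟨hfa, hfa, rfl⟩, rfl⟩
    rw [himg, csInf_singleton, csSup_singleton, Set.Ioo_self, Set.empty_inter]
  · by_cases hfb : f b = true
    · have himg : v '' 𝒯 = {v b} := by
        subst hb
        ext r
        constructor
        · rintro ⟨y, hy, rfl⟩
          rcases hy with ⟨_, _, he⟩ | ⟨h, _, _⟩
          · simp [he.symm]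
          · simp [hfb] at h
        · rintro rfl
          exact ⟨b, Or.inl ⟨hfb, hfb, rfl⟩, rfl⟩
      rw [himg, csInf_singleton, csSup_singleton, Set.Ioo_self, Set.inter_empty]
    · simp only [Bool.not_eq_true] at hfa hfb
      have hab : ¬ duelRel v f a b := by
        intro hd
        apply hne
        rcases hd with ⟨h, _, _⟩ | ⟨_, _, hz⟩
        · simp [hfa] at h
        subst ha; subst hb
        ext y
        constructor
        · rintro (⟨h, _, _⟩ | ⟨_, hy, hz'⟩)
          · simp [hfa] at h
          · exact Or.inr ⟨hfb, hy, fun w hw => duel_between _ _ _ _ (hz w hw) (hz' w hw)⟩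
        · rintro (⟨h, _, _⟩ | ⟨_, hy, hz'⟩)
          · simp [hfb] at h
          · have hz2 : ∀ w, f w = true →
                ¬ (min (v b) (v a) ≤ v w ∧ v w < max (v b) (v a)) := by
              intro w hw
              rw [min_comm, max_comm]; exact hz w hw
            exact Or.inr ⟨hfa, hy, fun w hw => duel_between _ _ _ _ (hz2 w hw) (hz' w hw)⟩
      have haS : a ∈ 𝒮 := by
        rw [ha]
        exact Or.inr ⟨hfa, hfa, fun z hz h => by simp at h; linarith [h.1, h.2]⟩
      have hbT : b ∈ 𝒯 := by
        rw [hb]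
        exact Or.inr ⟨hfb, hfb, fun z hz h => by simp at h; linarith [h.1, h.2]⟩
      unfold duelRel at hab
      push_neg at hab
      obtain ⟨z, hzt, hz1, hz2⟩ := hab.2 hfa hfb
      rcases le_total (v a) (v b) with hle | hle
      · rw [min_eq_left hle] at hz1
        rw [max_eq_right hle] at hz2
        exact sep_empty v 𝒮 𝒯 ⟨a, haS⟩ ⟨b, hbT⟩ (v z)
          (fun x hx => side_le v f a z hfa hzt hz1 x (by rwa [ha] at hx))
          (fun y hy => side_gt v f b z hfb hzt hz2 y (by rwa [hb] at hy))
      · rw [min_eq_right hle] at hz1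
        rw [max_eq_left hle] at hz2
        rw [Set.inter_comm]
        exact sep_empty v 𝒯 𝒮 ⟨b, hbT⟩ ⟨a, haS⟩ (v z)
          (fun y hy => side_le v f b z hfb hzt hz1 y (by rwa [hb] at hy))
          (fun x hx => side_gt v f a z hfa hzt hz2 x (by rwa [ha] at hx))
end

section
/- Suppose that at some stage the state vector satisfies ψ_{k₁l₁} = ψ_{k₂l₂} for all k₁~k₂ and l₁~l₂. Then after applying the dueling update (𝒢₁ψ)_{kl} = (2/N)·Σ_{k'} o(k',l)ψ_{k'l} − o(k,l)ψ_{kl}, the new amplitudes also satisfy (𝒢₁ψ)_{k₁l₁} = (𝒢₁ψ)_{k₂l₂} for all k₁~k₂ and l₁~l₂. -/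
/-- The oracle sign `o(x,y)` as a complex number. -/
noncomputable def duelO {S : Type*} (v : S → ℝ) (f : S → Bool) (x y : S) : ℂ :=
  if f x = true ∧ v x < v y then -1 else 1

/-- The dueling update on the first register. -/
noncomputable def G1 {S : Type*} [Fintype S] (v : S → ℝ) (f : S → Bool)
    (ψ : S × S → ℂ) : S × S → ℂ := fun kl =>
  (2 / (Fintype.card S : ℂ)) * ∑ k' : S, duelO v f k' kl.2 * ψ (k', kl.2) -
    duelO v f kl.1 kl.2 * ψ kl

lemma duelRel_refl {S : Type*} (v : S → ℝ) (f : S → Bool) (x : S) :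
    duelRel v f x x := by
  cases h : f x with
  | true => exact Or.inl ⟨h, h, rfl⟩
  | false =>
    refine Or.inr ⟨h, h, fun z _ hz => ?_⟩
    simp only [min_self, max_self] at hz
    exact absurd (lt_of_le_of_lt hz.1 hz.2) (lt_irrefl _)

lemma duelO_congr_right {S : Type*} (v : S → ℝ) (f : S → Bool) (x l₁ l₂ : S)
    (h : duelRel v f l₁ l₂) : duelO v f x l₁ = duelO v f x l₂ := by
  rcases h with ⟨_, _, hv⟩ | ⟨_, _, hz⟩
  · simp [duelO, hv]
  · unfold duelO
    by_cases hx : f x = true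
    · have : v x < v l₁ ↔ v x < v l₂ := by
        constructor
        · intro h1
          by_contra h2
          push_neg at h2
          exact hz x hx ⟨le_trans (min_le_right _ _) h2,
            lt_of_lt_of_le h1 (le_max_left _ _)⟩
        · intro h1
          by_contra h2
          push_neg at h2
          exact hz x hx ⟨le_trans (min_le_left _ _) h2,
            lt_of_lt_of_le h1 (le_max_right _ _)⟩
      simp [hx, this]
    · simp [hx]

lemma duelO_congr_left {S : Type*} (v : S → ℝ) (f : S → Bool) (k₁ k₂ l : S)
    (h : duelRel v f k₁ k₂) : duelO v f k₁ l = duelO v f k₂ l := by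
  rcases h with ⟨h1, h2, hv⟩ | ⟨h1, h2, _⟩
  · simp [duelO, h1, h2, hv]
  · simp [duelO, h1, h2]

/-- The update `𝒢₁` preserves cluster-uniformity of the state vector. -/
theorem G1_preserves_cluster_uniformity {S : Type*} [Fintype S]
    (v : S → ℝ) (f : S → Bool) (ψ : S × S → ℂ)
    (hψ : ∀ k₁ k₂ l₁ l₂ : S, duelRel v f k₁ k₂ → duelRel v f l₁ l₂ →
      ψ (k₁, l₁) = ψ (k₂, l₂)) :
    ∀ k₁ k₂ l₁ l₂ : S, duelRel v f k₁ k₂ → duelRel v f l₁ l₂ →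
      G1 v f ψ (k₁, l₁) = G1 v f ψ (k₂, l₂) := by
  intro k₁ k₂ l₁ l₂ hk hl
  unfold G1
  simp only
  have hsum : ∀ k' : S, duelO v f k' l₁ * ψ (k', l₁) = duelO v f k' l₂ * ψ (k', l₂) := by
    intro k'
    rw [duelO_congr_right v f k' l₁ l₂ hl, hψ k' k' l₁ l₂ (duelRel_refl v f k') hl]
  rw [Finset.sum_congr rfl (fun k' _ => hsum k'),
    duelO_congr_left v f k₁ k₂ l₁ hk, duelO_congr_right v f k₂ l₁ l₂ hl,
    hψ k₁ k₂ l₁ l₂ hk hl]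
end

section
/- The uniform initial state ψ_{kl} = 1/N for all k,l ∈ S is constant on products of clusters: ψ_{k₁l₁} = ψ_{k₂l₂} whenever k₁~k₂ and l₁~l₂; consequently, by induction, any finite sequence of alternating applications of the dueling updates 𝒢₁ and 𝒢₂ preserves this cluster-uniformity property. -/
/-- The dueling update on the second register. -/
noncomputable def G2 {S : Type*} [Fintype S] (v : S → ℝ) (f : S → Bool)
    (ψ : S × S → ℂ) : S × S → ℂ := fun kl =>
  (2 / (Fintype.card S : ℂ)) * ∑ l' : S, duelO v f l' kl.1 * ψ (kl.1, l') -
    duelO v f kl.2 kl.1 * ψ kl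

/-- `ψ` is constant on products of clusters. -/
def ClusterUniform {S : Type*} (v : S → ℝ) (f : S → Bool) (ψ : S × S → ℂ) : Prop :=
  ∀ k₁ k₂ l₁ l₂ : S, duelRel v f k₁ k₂ → duelRel v f l₁ l₂ →
    ψ (k₁, l₁) = ψ (k₂, l₂)

lemma duelO_congr {S : Type*} (v : S → ℝ) (f : S → Bool) {k₁ k₂ l₁ l₂ : S}
    (hk : duelRel v f k₁ k₂) (hl : duelRel v f l₁ l₂) :
    duelO v f k₁ l₁ = duelO v f k₂ l₂ := by
  unfold duelO
  rcases hk with ⟨hf1, hf2, hv⟩ | ⟨hf1, hf2, _⟩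
  · have : (v k₁ < v l₁) ↔ (v k₂ < v l₂) := by
      rw [← hv]
      rcases hl with ⟨_, _, hlv⟩ | ⟨_, _, hz⟩
      · rw [hlv]
      · constructor
        · intro h
          by_contra h2
          push_neg at h2
          exact hz k₁ hf1 ⟨le_trans (min_le_right _ _) h2,
            lt_of_lt_of_le h (le_max_left _ _)⟩
        · intro h
          by_contra h2
          push_neg at h2
          exact hz k₁ hf1 ⟨le_trans (min_le_left _ _) h2,
            lt_of_lt_of_le h (le_max_right _ _)⟩
    simp [hf1, hf2, this]
  · simp [hf1, hf2]

lemma G1_preserves {S : Type*} [Fintype S] (v : S → ℝ) (f : S → Bool)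
    {ψ : S × S → ℂ} (hψ : ClusterUniform v f ψ) :
    ClusterUniform v f (G1 v f ψ) := by
  intro k₁ k₂ l₁ l₂ hk hl
  unfold G1
  have hsum : ∑ k' : S, duelO v f k' l₁ * ψ (k', l₁)
      = ∑ k' : S, duelO v f k' l₂ * ψ (k', l₂) := by
    refine Finset.sum_congr rfl fun k' _ => ?_
    rw [duelO_congr v f (duelRel_refl v f k') hl,
      hψ k' k' l₁ l₂ (duelRel_refl v f k') hl]
  simp only
  rw [hsum, duelO_congr v f hk hl, hψ k₁ k₂ l₁ l₂ hk hl]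

lemma G2_preserves {S : Type*} [Fintype S] (v : S → ℝ) (f : S → Bool)
    {ψ : S × S → ℂ} (hψ : ClusterUniform v f ψ) :
    ClusterUniform v f (G2 v f ψ) := by
  intro k₁ k₂ l₁ l₂ hk hl
  unfold G2
  have hsum : ∑ l' : S, duelO v f l' k₁ * ψ (k₁, l')
      = ∑ l' : S, duelO v f l' k₂ * ψ (k₂, l') := by
    refine Finset.sum_congr rfl fun l' _ => ?_
    rw [duelO_congr v f (duelRel_refl v f l') hk,
      hψ k₁ k₂ l' l' hk (duelRel_refl v f l')]
  simp only
  rw [hsum, duelO_congr v f hl hk, hψ k₁ k₂ l₁ l₂ hk hl]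

/-- The uniform initial state is cluster-uniform, and any finite sequence of
applications of the dueling updates `𝒢₁`/`𝒢₂` preserves cluster-uniformity. -/
theorem dueling_preserves_cluster_uniformity {S : Type*} [Fintype S]
    (v : S → ℝ) (f : S → Bool) :
    ClusterUniform v f (fun _ => 1 / (Fintype.card S : ℂ)) ∧
      ∀ ops : List Bool,
        ClusterUniform v f
          (ops.foldr (fun b ψ => if b then G1 v f ψ else G2 v f ψ)
            (fun _ => 1 / (Fintype.card S : ℂ))) := by
  constructor
  · intro _ _ _ _ _ _; rfl
  · intro ops
    induction ops with
    | nil => intro _ _ _ _ _ _; rfl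
    | cons b tl ih =>
      cases b
      · exact G2_preserves v f ih
      · exact G1_preserves v f ih
end
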